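/- Let A be a *-algebra and f a projection in A (or its multiplier algebra) which is full in the strong sense: there exist elements x_α ∈ Af such that for every x ∈ A there is a finite set F with x(Σ_{α∈F} x_α x_α*) = (Σ_{α∈F} x_α x_α*)x = x and x x_α x_α* = 0 for α ∉ F. Then the intersection of the positive cone of A (finite sums of elements x*x) with fAf equals the positive cone of the *-algebra fAf. -/

import Mathlib

/-!
STATEMENT 4: If `f` is a projection in a *-algebra `A` which is full in the
strong sense, then the intersection of the positive cone of `A` with `fAf`
equals the positive cone of `fAf`.
-/

/-- The positive cone of a `*`-algebra: finite sums of elements `x* x`. -/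
def posCone (A : Type) [NonUnitalRing A] [StarRing A] : Set A :=
  (AddSubmonoid.closure {y : A | ∃ x : A, y = star x * x} : AddSubmonoid A)

theorem posCone_corner_of_full
    (A : Type) [NonUnitalRing A] [StarRing A]
    (f : A) (hidem : f * f = f) (hsa : star f = f)
    (ι : Type) (x : ι → A) (hx : ∀ α, x α * f = x α)
    (hfull : ∀ a : A, ∃ F : Finset ι,
      a * (∑ α ∈ F, x α * star (x α)) = a ∧
      (∑ α ∈ F, x α * star (x α)) * a = a ∧
      ∀ α ∉ F, a * (x α * star (x α)) = 0) :
    posCone A ∩ {y : A | f * y * f = y} =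
      (AddSubmonoid.closure {y : A | ∃ z : A, f * z * f = z ∧ y = star z * z} : AddSubmonoid A) := by
  have hfx : ∀ α, f * star (x α) = star (x α) := by
    intro α
    have := congrArg star (hx α)
    rwa [star_mul, hsa] at this
  have key : ∀ b : A, b * f = b →
      star b * b ∈ (AddSubmonoid.closure
        {y : A | ∃ z : A, f * z * f = z ∧ y = star z * z} : AddSubmonoid A) := by
    intro b hb
    obtain ⟨F, h1, h2, _⟩ := hfull b
    have heq : star b * b = ∑ α ∈ F, star (star (x α) * b) * (star (x α) * b) := by
      calc star b * b = star b * ((∑ α ∈ F, x α * star (x α)) * b) := by rw [h2]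
        _ = ∑ α ∈ F, star (star (x α) * b) * (star (x α) * b) := by
            rw [Finset.sum_mul, Finset.mul_sum]
            refine Finset.sum_congr rfl fun α _ => ?_
            simp [mul_assoc]
    rw [heq]
    refine AddSubmonoid.sum_mem _ fun α _ => AddSubmonoid.subset_closure ?_
    refine ⟨star (x α) * b, ?_, rfl⟩
    rw [mul_assoc, mul_assoc, hb, ← mul_assoc, hfx]
  apply Set.eq_of_subset_of_subset
  · rintro y ⟨hy, hyf⟩
    have main : ∀ y ∈ posCone A, f * y * f ∈ (AddSubmonoid.closure
        {y : A | ∃ z : A, f * z * f = z ∧ y = star z * z} : AddSubmonoid A) := by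
      intro y hy
      induction hy using AddSubmonoid.closure_induction with
      | mem w hw =>
        obtain ⟨a, rfl⟩ := hw
        have : f * (star a * a) * f = star (a * f) * (a * f) := by
          rw [star_mul, hsa]
          noncomm_ring
        rw [this]
        exact key (a * f) (by rw [mul_assoc, hidem])
      | zero => simpa using AddSubmonoid.zero_mem _
      | add u v _ _ hu hv =>
        have : f * (u + v) * f = f * u * f + f * v * f := by noncomm_ring
        rw [this]; exact AddSubmonoid.add_mem _ hu hv
    have := main y hy
    rwa [hyf] at this
  · intro y hy
    constructor
    · exact AddSubmonoid.closure_mono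
        (fun w hw => by obtain ⟨z, _, hz⟩ := hw; exact ⟨z, hz⟩) hy
    · show f * y * f = y
      induction hy using AddSubmonoid.closure_induction with
      | mem w hw =>
        obtain ⟨z, hz, rfl⟩ := hw
        have hzf : z * f = z := by
          conv_lhs => rw [← hz]
          rw [mul_assoc, mul_assoc, hidem, ← mul_assoc, hz]
        have hfz : f * z = z := by
          conv_lhs => rw [← hz]
          rw [← mul_assoc, ← mul_assoc, hidem, hz]
        have hsz : f * star z = star z := by
          have := congrArg star hzf
          rwa [star_mul, hsa] at this
        rw [← mul_assoc, hsz, mul_assoc, hzf]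
      | zero => simp
      | add u v _ _ hu hv =>
        have : f * (u + v) * f = f * u * f + f * v * f := by noncomm_ring
        rw [this, hu, hv]
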